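/- Multiplicity one for Young subgroups (Young's rule consequence): for any partition λ of k, the trivial representation of the Young subgroup S_λ = S_{λ_1} × ⋯ × S_{λ_r} occurs with multiplicity exactly one in the restriction to S_λ of the irreducible representation V^λ of S_k. -/

import Mathlib

/-- A representation is irreducible. -/
def IsIrrep {G V : Type*} [Group G] [AddCommGroup V] [Module ℂ V]
    (ρ : Representation ℂ G V) : Prop :=
  Nontrivial V ∧ ∀ p : Submodule ℂ V, (∀ g, ∀ v ∈ p, ρ g v ∈ p) → p = ⊥ ∨ p = ⊤

/-- The Young subgroup of `S_k` preserving the fibers of a (monotone) block-assignment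
function `f : Fin k → ℕ`; for monotone `f` the fibers are consecutive blocks. -/
def youngSubgroup {k : ℕ} (f : Fin k → ℕ) : Subgroup (Equiv.Perm (Fin k)) where
  carrier := {σ | ∀ i, f (σ i) = f i}
  one_mem' := by intro i; simp
  mul_mem' := by
    intro a b ha hb i
    have h1 := hb i
    have h2 := ha (b i)
    simpa [h1] using h2
  inv_mem' := by
    intro a ha i
    have h := ha (a⁻¹ i)
    rw [Equiv.Perm.coe_inv, Equiv.apply_symm_apply] at h
    exact h.symm

/-- The subspace of `H`-invariant vectors of a representation. -/
def invariants {G V : Type*} [Group G] [AddCommGroup V] [Module ℂ V]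
    (ρ : Representation ℂ G V) (H : Subgroup G) : Submodule ℂ V where
  carrier := {v | ∀ g ∈ H, ρ g v = v}
  add_mem' := by intro a b ha hb g hg; rw [map_add, ha g hg, hb g hg]
  zero_mem' := by intro g hg; simp
  smul_mem' := by intro c v hv g hg; rw [map_smul, hv g hg]

theorem Equiv.Perm.apply_inv_self {α : Type*} (f : Equiv.Perm α) (x : α) : f (f⁻¹ x) = x :=
  Equiv.apply_symm_apply f x

theorem Equiv.Perm.inv_apply_self {α : Type*} (f : Equiv.Perm α) (x : α) : f⁻¹ (f x) = x :=
  Equiv.symm_apply_apply f x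

open Finset

section AlgebraPart

attribute [local instance] Classical.propDecidable

variable {k : ℕ} {V : Type*} [AddCommGroup V] [Module ℂ V]
variable (ρ : Representation ℂ (Equiv.Perm (Fin k)) V)

noncomputable def projInv (H : Subgroup (Equiv.Perm (Fin k))) : V →ₗ[ℂ] V :=
  (Fintype.card H : ℂ)⁻¹ • ∑ σ : H, ρ (σ : Equiv.Perm (Fin k))

noncomputable def sgnAvg (H : Subgroup (Equiv.Perm (Fin k))) : V →ₗ[ℂ] V :=
  (Fintype.card H : ℂ)⁻¹ • ∑ σ : H,
    ((Equiv.Perm.sign (σ : Equiv.Perm (Fin k)) : ℤ) : ℂ) • (ρ (σ : Equiv.Perm (Fin k)) : V →ₗ[ℂ] V)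

variable {ρ}

lemma projInv_apply (H : Subgroup (Equiv.Perm (Fin k))) (v : V) :
    projInv ρ H v = (Fintype.card H : ℂ)⁻¹ • ∑ σ : H, ρ (σ : Equiv.Perm (Fin k)) v := by
  simp [projInv, LinearMap.sum_apply]

lemma sgnAvg_apply (H : Subgroup (Equiv.Perm (Fin k))) (v : V) :
    sgnAvg ρ H v = (Fintype.card H : ℂ)⁻¹ • ∑ σ : H,
      ((Equiv.Perm.sign (σ : Equiv.Perm (Fin k)) : ℤ) : ℂ) • ρ (σ : Equiv.Perm (Fin k)) v := by
  simp [sgnAvg, LinearMap.sum_apply]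

lemma projInv_fixed {H : Subgroup (Equiv.Perm (Fin k))} {v : V}
    (hv : ∀ g ∈ H, ρ g v = v) : projInv ρ H v = v := by
  rw [projInv_apply]
  have : ∀ σ : H, ρ (σ : Equiv.Perm (Fin k)) v = v := fun σ => hv σ σ.2
  rw [Finset.sum_congr rfl fun σ _ => this σ, Finset.sum_const, Finset.card_univ,
    ← Nat.cast_smul_eq_nsmul ℂ, smul_smul, inv_mul_cancel₀ (by exact_mod_cast Fintype.card_ne_zero), one_smul]

lemma projInv_mem_invariants (H : Subgroup (Equiv.Perm (Fin k))) (v : V)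
    {g : Equiv.Perm (Fin k)} (hg : g ∈ H) : ρ g (projInv ρ H v) = projInv ρ H v := by
  rw [projInv_apply, map_smul, map_sum]
  congr 1
  refine Fintype.sum_equiv (Equiv.mulLeft (⟨g, hg⟩ : H)) _ _ fun σ => ?_
  have : ((Equiv.mulLeft (⟨g, hg⟩ : H) σ : H) : Equiv.Perm (Fin k)) = g * (σ : Equiv.Perm (Fin k)) := rfl
  rw [this, map_mul]
  rfl

lemma projInv_comp_left {H : Subgroup (Equiv.Perm (Fin k))} {g : Equiv.Perm (Fin k)}
    (hg : g ∈ H) (v : V) : projInv ρ H (ρ g v) = projInv ρ H v := by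
  rw [projInv_apply, projInv_apply]
  congr 1
  refine Fintype.sum_equiv (Equiv.mulRight (⟨g, hg⟩ : H)) _ _ fun σ => ?_
  have : ((Equiv.mulRight (⟨g, hg⟩ : H) σ : H) : Equiv.Perm (Fin k)) = (σ : Equiv.Perm (Fin k)) * g := rfl
  rw [this, map_mul]
  rfl


lemma sign_sq (g : Equiv.Perm (Fin k)) :
    ((Equiv.Perm.sign g : ℤ) : ℂ) * ((Equiv.Perm.sign g : ℤ) : ℂ) = 1 := by
  rcases Int.units_eq_one_or (Equiv.Perm.sign g) with h | h <;> rw [h] <;> norm_num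

lemma sgnAvg_fixed {H : Subgroup (Equiv.Perm (Fin k))} {v : V}
    (hv : ∀ g ∈ H, ρ g v = ((Equiv.Perm.sign g : ℤ) : ℂ) • v) : sgnAvg ρ H v = v := by
  rw [sgnAvg_apply]
  have : ∀ σ : H, ((Equiv.Perm.sign (σ : Equiv.Perm (Fin k)) : ℤ) : ℂ) •
      ρ (σ : Equiv.Perm (Fin k)) v = v := by
    intro σ
    rw [hv σ σ.2, smul_smul, sign_sq, one_smul]
  rw [Finset.sum_congr rfl fun σ _ => this σ, Finset.sum_const, Finset.card_univ,
    ← Nat.cast_smul_eq_nsmul ℂ, smul_smul,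
    inv_mul_cancel₀ (by exact_mod_cast Fintype.card_ne_zero), one_smul]

lemma apply_sgnAvg {H : Subgroup (Equiv.Perm (Fin k))} {g : Equiv.Perm (Fin k)}
    (hg : g ∈ H) (v : V) :
    ρ g (sgnAvg ρ H v) = ((Equiv.Perm.sign g : ℤ) : ℂ) • sgnAvg ρ H v := by
  rw [sgnAvg_apply, map_smul, map_sum, smul_comm]
  congr 1
  rw [Finset.smul_sum]
  refine Fintype.sum_equiv (Equiv.mulLeft (⟨g, hg⟩ : H)) _ _ fun σ => ?_
  have h1 : ((Equiv.mulLeft (⟨g, hg⟩ : H) σ : H) : Equiv.Perm (Fin k))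
      = g * (σ : Equiv.Perm (Fin k)) := rfl
  rw [map_smul, h1, map_mul, smul_smul, map_mul]
  rw [Module.End.mul_apply]
  congr 1
  rcases Int.units_eq_one_or (Equiv.Perm.sign g) with h | h <;>
    rcases Int.units_eq_one_or (Equiv.Perm.sign (σ : Equiv.Perm (Fin k))) with h' | h' <;>
    rw [h, h'] <;> norm_num


lemma Tg_coset {H H' : Subgroup (Equiv.Perm (Fin k))} {t s g1 g2 : Equiv.Perm (Fin k)}
    (ht : t ∈ H) (hs : s ∈ H') (hg : g2 = t * g1 * s) (v : V) :
    projInv ρ H (ρ g2 (sgnAvg ρ H' v)) =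
      ((Equiv.Perm.sign s : ℤ) : ℂ) • projInv ρ H (ρ g1 (sgnAvg ρ H' v)) := by
  rw [hg, map_mul, map_mul, Module.End.mul_apply, Module.End.mul_apply,
    apply_sgnAvg hs, map_smul, map_smul, map_smul, projInv_comp_left ht]

lemma Tg_zero {H H' : Subgroup (Equiv.Perm (Fin k))} {t s g : Equiv.Perm (Fin k)}
    (ht : t ∈ H) (hs : s ∈ H') (hcomm : t * g = g * s)
    (hsgn : Equiv.Perm.sign s = -1) (v : V) :
    projInv ρ H (ρ g (sgnAvg ρ H' v)) = 0 := by
  have h1 : g = t * g * s⁻¹ := by rw [hcomm]; group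
  have h2 := Tg_coset (ρ := ρ) ht (inv_mem hs) h1 v
  rw [map_inv, hsgn] at h2
  have h3 : projInv ρ H (ρ g (sgnAvg ρ H' v)) = - projInv ρ H (ρ g (sgnAvg ρ H' v)) := by
    conv_lhs => rw [h2]
    norm_num
  have := add_eq_zero_iff_eq_neg.2 h3
  rw [← two_smul ℂ] at this
  have h4 := smul_eq_zero.1 this
  simpa using h4

end AlgebraPart

section Comb
variable {k : ℕ}

/-- `g` is "good" if distinct elements with the same `f∘g`-value (row) have distinct
`f'`-values (columns). -/
def IsGoodPerm (f f' : Fin k → ℕ) (g : Equiv.Perm (Fin k)) : Prop :=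
  ∀ x y : Fin k, f (g x) = f (g y) → f' x = f' y → x = y

variable {f f' : Fin k → ℕ}

lemma filter_comp_card (g : Equiv.Perm (Fin k)) (r : ℕ) :
    (univ.filter fun x => f (g x) = r).card = (univ.filter fun y => f y = r).card := by
  apply Finset.card_bij (fun x _ => g x)
  · intro a ha; simp only [mem_filter, mem_univ, true_and] at ha ⊢; exact ha
  · intro a _ b _ h; exact g.injective h
  · intro b hb
    simp only [mem_filter, mem_univ, true_and] at hb
    exact ⟨g⁻¹ b, by simp only [mem_filter, mem_univ, true_and, Equiv.Perm.apply_inv_self]; exact hb, by simp⟩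

lemma contrib_eq
    (htrans : ∀ i : ℕ,
      (Finset.univ.filter fun t => f' t = i).card =
        ((Finset.image f Finset.univ).filter
          fun j => i < (Finset.univ.filter fun t => f t = j).card).card)
    {g : Equiv.Perm (Fin k)} (hg : IsGoodPerm f f' g) (c : ℕ) :
    ∀ r ∈ image f univ,
      (univ.filter fun x => f (g x) = r ∧ f' x ≤ c).card
        = min ((univ.filter fun y => f y = r).card) (c + 1) := by
  set Λ : ℕ → ℕ := fun r => (univ.filter fun y => f y = r).card with hΛ
  -- termwise bound
  have hle : ∀ r ∈ image f univ,
      (univ.filter fun x => f (g x) = r ∧ f' x ≤ c).card ≤ min (Λ r) (c + 1) := by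
    intro r _
    refine le_min ?_ ?_
    · calc (univ.filter fun x => f (g x) = r ∧ f' x ≤ c).card
          ≤ (univ.filter fun x => f (g x) = r).card := by
            apply Finset.card_le_card
            intro x hx
            simp only [mem_filter, mem_univ, true_and] at hx ⊢
            exact hx.1
        _ = Λ r := filter_comp_card g r
    · have : (univ.filter fun x => f (g x) = r ∧ f' x ≤ c).card ≤ (range (c+1)).card := by
        apply Finset.card_le_card_of_injOn (fun x => f' x)
        · intro x hx
          simp only [mem_coe, mem_filter, mem_univ, true_and] at hx
          simp only [mem_coe, mem_range]
          omega
        · intro x hx y hy hxy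
          simp only [coe_filter, Set.mem_setOf_eq] at hx hy
          exact hg x y (hx.2.1.trans hy.2.1.symm) hxy
      simpa using this
  -- sum equality
  have hA : (univ.filter fun x => f' x ≤ c).card
      = ∑ r ∈ image f univ, (univ.filter fun x => f (g x) = r ∧ f' x ≤ c).card := by
    rw [Finset.card_eq_sum_card_fiberwise (f := fun x => f (g x)) (t := image f univ)
      (fun x _ => Finset.mem_image_of_mem f (mem_univ (g x)))]
    refine Finset.sum_congr rfl fun r _ => ?_
    congr 1
    ext x
    simp only [mem_filter, mem_univ, true_and]
    tauto
  have hB : (univ.filter fun x => f' x ≤ c).card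
      = ∑ j ∈ range (c+1), (univ.filter fun t => f' t = j).card := by
    rw [Finset.card_eq_sum_card_fiberwise (f := fun x => f' x) (t := range (c+1))
      (fun x hx => by simp only [mem_coe, mem_filter, mem_univ, true_and] at hx; simp only [mem_coe, mem_range]; omega)]
    refine Finset.sum_congr rfl fun j hj => ?_
    simp only [mem_range] at hj
    congr 1
    ext x
    simp only [mem_filter, mem_univ, true_and]
    constructor
    · exact fun h => h.2
    · intro h; exact ⟨by omega, h⟩
  have hC : ∑ j ∈ range (c+1), (univ.filter fun t => f' t = j).card
      = ∑ r ∈ image f univ, min (Λ r) (c + 1) := by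
    have h1 : ∀ j, (univ.filter fun t => f' t = j).card
        = ∑ r ∈ image f univ, if j < Λ r then 1 else 0 := by
      intro j
      rw [htrans j, Finset.card_filter]
    rw [Finset.sum_congr rfl fun j _ => h1 j, Finset.sum_comm]
    refine Finset.sum_congr rfl fun r _ => ?_
    rw [← Finset.card_filter]
    have : (range (c+1)).filter (fun j => j < Λ r) = range (min (Λ r) (c+1)) := by
      ext j
      simp only [mem_filter, mem_range, lt_min_iff]
      tauto
    rw [this, Finset.card_range]
  have hsum : ∑ r ∈ image f univ, (univ.filter fun x => f (g x) = r ∧ f' x ≤ c).card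
      = ∑ r ∈ image f univ, min (Λ r) (c + 1) := by
    rw [← hA, hB, hC]
  exact fun r hr => (Finset.sum_eq_sum_iff_of_le hle).1 hsum r hr

lemma colBound
    (htrans : ∀ i : ℕ,
      (Finset.univ.filter fun t => f' t = i).card =
        ((Finset.image f Finset.univ).filter
          fun j => i < (Finset.univ.filter fun t => f t = j).card).card)
    {g : Equiv.Perm (Fin k)} (hg : IsGoodPerm f f' g) (x : Fin k) :
    f' x < (univ.filter fun y => f y = f (g x)).card := by
  set r := f (g x) with hr
  have hrmem : r ∈ image f univ := Finset.mem_image_of_mem f (mem_univ (g x))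
  have hxmem : x ∈ univ.filter fun y => f (g y) = r := by
    simp only [mem_filter, mem_univ, true_and, hr]
  have hpos : 0 < (univ.filter fun y => f y = r).card := by
    rw [← filter_comp_card g r]
    exact Finset.card_pos.2 ⟨x, hxmem⟩
  set Λr := (univ.filter fun y => f y = r).card with hΛr
  have hkey := contrib_eq htrans hg (Λr - 1) r hrmem
  have hmin : min Λr (Λr - 1 + 1) = Λr := by omega
  rw [← hΛr, hmin] at hkey
  have hsub : (univ.filter fun y => f (g y) = r ∧ f' y ≤ Λr - 1)
      ⊆ (univ.filter fun y => f (g y) = r) := by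
    intro y hy
    simp only [mem_filter, mem_univ, true_and] at hy ⊢
    exact hy.1
  have hcard : (univ.filter fun y => f (g y) = r).card
      ≤ (univ.filter fun y => f (g y) = r ∧ f' y ≤ Λr - 1).card := by
    rw [hkey, filter_comp_card g r]
  have heq := Finset.eq_of_subset_of_card_le hsub hcard
  have : x ∈ univ.filter fun y => f (g y) = r ∧ f' y ≤ Λr - 1 := heq ▸ hxmem
  simp only [mem_filter, mem_univ, true_and] at this
  omega

end Comb

section CosetLemmas
variable {k : ℕ} {f f' : Fin k → ℕ}

lemma youngSubgroup_mem {g : Equiv.Perm (Fin k)} :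
    g ∈ youngSubgroup f ↔ ∀ i, f (g i) = f i := Iff.rfl

lemma rowImage
    (htrans : ∀ i : ℕ,
      (Finset.univ.filter fun t => f' t = i).card =
        ((Finset.image f Finset.univ).filter
          fun j => i < (Finset.univ.filter fun t => f t = j).card).card)
    {g : Equiv.Perm (Fin k)} (hg : IsGoodPerm f f' g) (r : ℕ) :
    (univ.filter fun y => f y = r).image (fun y => f' (g⁻¹ y))
      = range ((univ.filter fun y => f y = r).card) := by
  set Λr := (univ.filter fun y => f y = r).card with hΛr
  have hinj : Set.InjOn (fun y => f' (g⁻¹ y)) (univ.filter fun y => f y = r) := by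
    intro y hy z hz hyz
    simp only [coe_filter, Set.mem_setOf_eq] at hy hz
    have h1 : f (g (g⁻¹ y)) = f (g (g⁻¹ z)) := by
      rw [Equiv.Perm.apply_inv_self, Equiv.Perm.apply_inv_self, hy.2, hz.2]
    have := hg (g⁻¹ y) (g⁻¹ z) h1 hyz
    exact g⁻¹.injective this |>.symm ▸ (by
      have := congrArg g this
      simpa [Equiv.Perm.apply_inv_self] using this)
  have hsub : (univ.filter fun y => f y = r).image (fun y => f' (g⁻¹ y)) ⊆ range Λr := by
    intro c hc
    simp only [Finset.mem_image] at hc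
    obtain ⟨y, hy, rfl⟩ := hc
    simp only [mem_filter, mem_univ, true_and] at hy
    have := colBound htrans hg (g⁻¹ y)
    rw [Equiv.Perm.apply_inv_self, hy] at this
    simpa [mem_range, hΛr] using this
  have hcard : (range Λr).card ≤
      ((univ.filter fun y => f y = r).image (fun y => f' (g⁻¹ y))).card := by
    rw [Finset.card_image_of_injOn hinj, Finset.card_range]
  exact Finset.eq_of_subset_of_card_le hsub hcard

lemma sameCoset
    (htrans : ∀ i : ℕ,
      (Finset.univ.filter fun t => f' t = i).card =
        ((Finset.image f Finset.univ).filter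
          fun j => i < (Finset.univ.filter fun t => f t = j).card).card)
    {g1 g2 : Equiv.Perm (Fin k)} (hg1 : IsGoodPerm f f' g1) (hg2 : IsGoodPerm f f' g2) :
    ∃ t ∈ youngSubgroup f, ∃ s ∈ youngSubgroup f', g2 = t * g1 * s := by
  have hex : ∀ x : Fin k, ∃ y, f y = f x ∧ f' (g1⁻¹ y) = f' (g2⁻¹ x) := by
    intro x
    have hx : f' (g2⁻¹ x) < (univ.filter fun y => f y = f x).card := by
      have := colBound htrans hg2 (g2⁻¹ x)
      rwa [Equiv.Perm.apply_inv_self] at this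
    have himg := rowImage htrans hg1 (f x)
    have : f' (g2⁻¹ x) ∈ (univ.filter fun y => f y = f x).image (fun y => f' (g1⁻¹ y)) := by
      rw [himg, mem_range]; exact hx
    simp only [Finset.mem_image, mem_filter, mem_univ, true_and] at this
    obtain ⟨y, hy1, hy2⟩ := this
    exact ⟨y, hy1, hy2⟩
  choose p hp1 hp2 using hex
  have hinj : Function.Injective p := by
    intro x x' hpp
    have h1 : f x = f x' := by rw [← hp1 x, ← hp1 x', hpp]
    have h2 : f' (g2⁻¹ x) = f' (g2⁻¹ x') := by rw [← hp2 x, ← hp2 x', hpp]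
    have h3 : f (g2 (g2⁻¹ x)) = f (g2 (g2⁻¹ x')) := by
      rw [Equiv.Perm.apply_inv_self, Equiv.Perm.apply_inv_self, h1]
    have := hg2 (g2⁻¹ x) (g2⁻¹ x') h3 h2
    have := congrArg g2 this
    simpa [Equiv.Perm.apply_inv_self] using this
  let π : Equiv.Perm (Fin k) := Equiv.ofBijective p (Finite.injective_iff_bijective.mp hinj)
  have hπ : ∀ x, π x = p x := fun x => rfl
  refine ⟨π⁻¹, ?_, g1⁻¹ * π * g2, ?_, by group⟩
  · intro i
    have := hp1 (π⁻¹ i)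
    rw [← hπ, Equiv.Perm.apply_inv_self] at this
    exact this.symm
  · intro i
    show f' (g1⁻¹ (π (g2 i))) = f' i
    rw [hπ, hp2 (g2 i), Equiv.Perm.inv_apply_self]

lemma notGood_witness {g : Equiv.Perm (Fin k)} (h : ¬ IsGoodPerm f f' g) :
    ∃ t s : Equiv.Perm (Fin k), t ∈ youngSubgroup f ∧ s ∈ youngSubgroup f' ∧
      t * g = g * s ∧ Equiv.Perm.sign s = -1 := by
  simp only [IsGoodPerm, not_forall] at h
  obtain ⟨x, y, hfr, hfc, hxy⟩ := h
  refine ⟨Equiv.swap (g x) (g y), Equiv.swap x y, ?_, ?_, ?_, Equiv.Perm.sign_swap hxy⟩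
  · intro i
    rcases eq_or_ne i (g x) with rfl | h1
    · rw [Equiv.swap_apply_left, ← hfr]
    · rcases eq_or_ne i (g y) with rfl | h2
      · rw [Equiv.swap_apply_right, hfr]
      · rw [Equiv.swap_apply_of_ne_of_ne h1 h2]
  · intro i
    rcases eq_or_ne i x with rfl | h1
    · rw [Equiv.swap_apply_left, ← hfc]
    · rcases eq_or_ne i y with rfl | h2
      · rw [Equiv.swap_apply_right, hfc]
      · rw [Equiv.swap_apply_of_ne_of_ne h1 h2]
  · rw [Equiv.swap_apply_apply]
    group

lemma invariants_eq_range {V : Type*} [AddCommGroup V] [Module ℂ V]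
    (ρ : Representation ℂ (Equiv.Perm (Fin k)) V) (H : Subgroup (Equiv.Perm (Fin k))) :
    invariants ρ H = LinearMap.range (projInv ρ H) := by
  classical
  ext v
  constructor
  · intro hv
    exact ⟨v, projInv_fixed hv⟩
  · rintro ⟨u, rfl⟩
    intro g hg
    exact projInv_mem_invariants H u hg

end CosetLemmas

/-- Young's rule, multiplicity one: for a partition `λ ⊢ k` (encoded by a monotone
block-assignment `f : Fin k → ℕ` whose fibers are the rows), the trivial representation of the
Young subgroup `S_λ` occurs with multiplicity exactly one in the restriction of the irreducible
representation `V^λ` of `S_k`. Here `V^λ` is characterized as an irreducible representation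
having a nonzero `S_λ`-invariant vector and a nonzero vector transforming by the sign character
under the Young subgroup `S_{λ'}` of the transposed partition `λ'` (encoded by `f'`). -/
theorem stmt_5 {k : ℕ} (f f' : Fin k → ℕ) (hf : Monotone f) (hf' : Monotone f')
    (htrans : ∀ i : ℕ,
      (Finset.univ.filter fun t => f' t = i).card =
        ((Finset.image f Finset.univ).filter
          fun j => i < (Finset.univ.filter fun t => f t = j).card).card)
    {V : Type*} [AddCommGroup V] [Module ℂ V] [FiniteDimensional ℂ V]
    (ρ : Representation ℂ (Equiv.Perm (Fin k)) V)
    (hirr : IsIrrep ρ)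
    (h1 : ∃ v : V, v ≠ 0 ∧ ∀ σ ∈ youngSubgroup f, ρ σ v = v)
    (h2 : ∃ v : V, v ≠ 0 ∧ ∀ σ ∈ youngSubgroup f',
      ρ σ v = ((Equiv.Perm.sign σ : ℤ) : ℂ) • v) :
    Module.finrank ℂ ↥(invariants ρ (youngSubgroup f)) = 1 := by
  classical
  obtain ⟨v, hv0, hv⟩ := h1
  obtain ⟨w, hw0, hw⟩ := h2
  have hQw : sgnAvg ρ (youngSubgroup f') w = w := sgnAvg_fixed hw
  have hvinv : v ∈ invariants ρ (youngSubgroup f) := hv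
  have hPv : projInv ρ (youngSubgroup f) v = v := projInv_fixed hv
  -- the span of the orbit of `w` is everything
  set S : Submodule ℂ V :=
    Submodule.span ℂ (Set.range fun g : Equiv.Perm (Fin k) => ρ g w) with hS
  have hSinv : ∀ g, ∀ u ∈ S, ρ g u ∈ S := by
    intro g u hu
    have hmap : Submodule.map (ρ g) S ≤ S := by
      rw [hS, Submodule.map_span]
      refine Submodule.span_mono ?_
      rintro _ ⟨_, ⟨g', rfl⟩, rfl⟩
      refine ⟨g * g', ?_⟩
      show ρ (g * g') w = ρ g (ρ g' w)
      rw [map_mul]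
      rfl
    exact hmap ⟨u, hu, rfl⟩
  have hStop : S = ⊤ := by
    rcases hirr.2 S hSinv with h | h
    · exfalso
      have hwS : w ∈ S := Submodule.subset_span ⟨1, by simp⟩
      rw [h, Submodule.mem_bot] at hwS
      exact hw0 hwS
    · exact h
  -- every vector in the range of the averaging projector lies in the span of the `T g w`
  have h5 : ∀ u : V, projInv ρ (youngSubgroup f) u ∈
      Submodule.span ℂ (Set.range fun g => projInv ρ (youngSubgroup f) (ρ g w)) := by
    intro u
    have hu : u ∈ S := hStop ▸ Submodule.mem_top
    have hmem : projInv ρ (youngSubgroup f) u ∈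
        Submodule.map (projInv ρ (youngSubgroup f)) S := ⟨u, hu, rfl⟩
    rw [hS, Submodule.map_span, ← Set.range_comp] at hmem
    exact hmem
  have hne : invariants ρ (youngSubgroup f) ≠ ⊥ := by
    intro hbot
    rw [hbot, Submodule.mem_bot] at hvinv
    exact hv0 hvinv
  by_cases hex : ∃ g0, IsGoodPerm f f' g0
  · obtain ⟨g0, hg0⟩ := hex
    set u : V := projInv ρ (youngSubgroup f) (ρ g0 (sgnAvg ρ (youngSubgroup f') w)) with hu
    have hgen : ∀ g, projInv ρ (youngSubgroup f) (ρ g w) ∈ Submodule.span ℂ {u} := by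
      intro g
      rw [← hQw]
      by_cases hgg : IsGoodPerm f f' g
      · obtain ⟨t, ht, s, hs, hcos⟩ := sameCoset htrans hg0 hgg
        rw [Tg_coset ht hs hcos]
        exact Submodule.smul_mem _ _ (Submodule.mem_span_singleton_self u)
      · obtain ⟨t, s, ht, hs, hcomm, hsgn⟩ := notGood_witness hgg
        rw [Tg_zero ht hs hcomm hsgn]
        exact Submodule.zero_mem _
    have hinv_le : invariants ρ (youngSubgroup f) ≤ Submodule.span ℂ {u} := by
      rw [invariants_eq_range]
      rintro x ⟨y, rfl⟩
      exact Submodule.span_le.2 (Set.range_subset_iff.2 hgen) (h5 y)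
    have hu0 : u ≠ 0 := by
      intro hu0
      apply hne
      rw [eq_bot_iff]
      intro x hx
      have := hinv_le hx
      rw [hu0, Submodule.span_zero_singleton] at this
      exact this
    have hle1 : Module.finrank ℂ ↥(invariants ρ (youngSubgroup f)) ≤ 1 := by
      have h1 : Module.finrank ℂ ↥(invariants ρ (youngSubgroup f))
          ≤ Module.finrank ℂ ↥(Submodule.span ℂ ({u} : Set V)) :=
        Submodule.finrank_mono hinv_le
      have h2 : Module.finrank ℂ ↥(Submodule.span ℂ ({u} : Set V)) = 1 :=
        finrank_span_singleton hu0
      omega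
    have hge1 : Module.finrank ℂ ↥(invariants ρ (youngSubgroup f)) ≠ 0 := by
      intro h0
      exact hne (Submodule.finrank_eq_zero.1 h0)
    omega
  · exfalso
    push_neg at hex
    have hzero : ∀ g, projInv ρ (youngSubgroup f) (ρ g w) = 0 := by
      intro g
      conv_lhs => rw [← hQw]
      obtain ⟨t, s, ht, hs, hcomm, hsgn⟩ := notGood_witness (hex g)
      exact Tg_zero (ρ := ρ) ht hs hcomm hsgn w
    have : v ∈ Submodule.span ℂ (Set.range fun g =>
        projInv ρ (youngSubgroup f) (ρ g w)) := by
      rw [← hPv]; exact h5 v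
    have hr0 : (Set.range fun g : Equiv.Perm (Fin k) =>
        projInv ρ (youngSubgroup f) (ρ g w)) = {0} := by
      ext x
      simp [hzero]
    rw [hr0, Submodule.span_zero_singleton, Submodule.mem_bot] at this
    exact hv0 this
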